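/- Let N ≥ 2 be an integer, b ∈ ℝ², and let f : ℝ² → ℝ be continuously differentiable. Let h(ξ) = |ξ + b|² and k(ξ) = |ξ|². Then for every ξ ∈ ℝ², Σ_{l=1}^{N} {k, f}(Q_l(ξ + b)) = {h, V*_b f}(ξ), i.e. V*_b({|·|², f}) = {|T_b ·|², V*_b f} pointwise. -/

import Mathlib

open Real Finset

/-- The Poisson bracket `{g, f} = ∂₁g ∂₂f - ∂₂g ∂₁f` on the plane identified with `ℂ`,
where `∂₁` (resp. `∂₂`) is the derivative in the direction `1` (resp. `I`). -/
noncomputable def pb (g f : ℂ → ℝ) (x : ℂ) : ℝ :=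
  fderiv ℝ g x 1 * fderiv ℝ f x Complex.I - fderiv ℝ g x Complex.I * fderiv ℝ f x 1

/-- The operator `(V*_b f)(ξ) = ∑_{l=1}^{N} f(Q_l (ξ + b))`, where the rotation `Q_l`
by angle `2πl/N` is multiplication by `exp(2πi/N)^l`. -/
noncomputable def Vstar (N : ℕ) (b : ℂ) (f : ℂ → ℝ) (ξ : ℂ) : ℝ :=
  ∑ l ∈ Finset.Icc 1 N, f ((Complex.exp (2 * π * Complex.I / N)) ^ l * (ξ + b))

/-- Any real-linear functional on `ℂ` is determined by its values at `1` and `I`. -/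
lemma clm_decomp (L : ℂ →L[ℝ] ℝ) (w : ℂ) : L w = w.re * L 1 + w.im * L Complex.I := by
  have h : w = w.re • (1:ℂ) + w.im • Complex.I := by simp [Complex.ext_iff]
  rw [show L w = L (w.re • (1:ℂ) + w.im • Complex.I) from by rw [← h],
    map_add, map_smul, map_smul, smul_eq_mul, smul_eq_mul]

/-- The real inner product on `ℂ` in coordinates. -/
lemma real_inner_c (z w : ℂ) : (inner ℝ z w : ℝ) = z.re * w.re + z.im * w.im := by
  simp [real_inner_eq_re_inner (𝕜 := ℂ), Complex.mul_re]
  ring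

/-- `V*_b` intertwines the unshifted and shifted rotation generators:
`V*_b({|·|², f}) = {|T_b ·|², V*_b f}` pointwise, for `f` of class `C¹`. -/
theorem Vstar_intertwines_rotation_generators
    (N : ℕ) (hN : 2 ≤ N) (b : ℂ) (f : ℂ → ℝ) (hf : ContDiff ℝ 1 f) :
    ∀ ξ : ℂ,
      (∑ l ∈ Finset.Icc 1 N,
        pb (fun η => ‖η‖ ^ 2) f
          ((Complex.exp (2 * π * Complex.I / N)) ^ l * (ξ + b))) =
      pb (fun η => ‖η + b‖ ^ 2) (Vstar N b f) ξ := by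
  intro ξ
  set ω : ℂ := Complex.exp (2 * π * Complex.I / N) with hω
  have hk : ∀ z : ℂ, fderiv ℝ (fun η : ℂ => ‖η‖ ^ 2) z = 2 • (innerSL ℝ z) := fun z => by
    simpa using ((hasFDerivAt_id z).norm_sq).fderiv
  have hh : fderiv ℝ (fun η : ℂ => ‖η + b‖ ^ 2) ξ = 2 • (innerSL ℝ (ξ + b)) := by
    simpa using (((hasFDerivAt_id ξ).add_const b).norm_sq).fderiv
  have hil : ∀ l : ℕ, HasFDerivAt (fun η : ℂ => ω ^ l * (η + b))
      ((ω ^ l) • ContinuousLinearMap.id ℝ ℂ) ξ :=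
    fun l => ((hasFDerivAt_id ξ).add_const b).const_mul _
  have hV : HasFDerivAt (Vstar N b f)
      (∑ l ∈ Finset.Icc 1 N,
        (fderiv ℝ f (ω ^ l * (ξ + b))).comp ((ω ^ l) • ContinuousLinearMap.id ℝ ℂ)) ξ :=
    HasFDerivAt.fun_sum fun l _ =>
      ((hf.differentiable one_ne_zero (ω ^ l * (ξ + b))).hasFDerivAt).comp ξ (hil l)
  simp only [pb, hk, hh, hV.fderiv]
  simp only [ContinuousLinearMap.sum_apply, ContinuousLinearMap.comp_apply,
    ContinuousLinearMap.smul_apply, ContinuousLinearMap.id_apply, innerSL_apply_apply,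
    ContinuousLinearMap.coe_smul', Pi.smul_apply, innerSL_apply_apply, smul_eq_mul,
    real_inner_c, Finset.mul_sum, ← Finset.sum_sub_distrib]
  refine Finset.sum_congr rfl fun l _ => ?_
  rw [clm_decomp (fderiv ℝ f (ω ^ l * (ξ + b))) (ω ^ l * Complex.I),
      clm_decomp (fderiv ℝ f (ω ^ l * (ξ + b))) (ω ^ l * 1)]
  simp only [nsmul_eq_mul, smul_eq_mul, mul_one, Complex.mul_re, Complex.mul_im, Complex.I_re,
    Complex.I_im, Complex.one_re, Complex.one_im, Complex.add_re, Complex.add_im]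
  ring
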